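/- Let p be a prime, s > 1, r ≥ s, and m1, n2, n1 integers with p | m2 and p ∤ n2. Then the sum over v4 ∈ (Z/p^s Z)^× and v3 ∈ Z/p^r Z with gcd(v3, p^{r-s}) = 1 of e(m1·\bar{v3}/p^{r-s})·e((m2·\bar{v4}·v3^2 + n2·v4)/p^s) equals 0. -/

import Mathlib

/-- `e x = exp(2πi x)`. -/
noncomputable def e (x : ℝ) : ℂ := Complex.exp (2 * Real.pi * Complex.I * x)

lemma e_add (x y : ℝ) : e (x + y) = e x * e y := by
  simp only [e, ← Complex.exp_add]
  congr 1
  push_cast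
  ring

lemma e_int (n : ℤ) : e n = 1 := by
  unfold e
  rw [show ((2:ℂ) * Real.pi * Complex.I * (n:ℝ)) = (n:ℤ) * (2 * Real.pi * Complex.I) by push_cast; ring]
  exact Complex.exp_int_mul_two_pi_mul_I n

lemma e_congr {A B : ℤ} {N : ℕ} (h : (N:ℤ) ∣ (A - B)) :
    e ((A:ℝ) / N) = e ((B:ℝ) / N) := by
  rcases Nat.eq_zero_or_pos N with h0 | hN
  · subst h0; norm_num
  obtain ⟨t, ht⟩ := h
  have hA : (A:ℝ) = B + t * N := by
    have : A = B + t * N := by linarith [ht]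
    exact_mod_cast congrArg (Int.cast : ℤ → ℝ) this
  have hNne : (N:ℝ) ≠ 0 := by exact_mod_cast hN.ne'
  rw [hA, show ((B:ℝ) + t*N)/N = (B:ℝ)/N + t by field_simp, e_add, e_int, mul_one]

lemma e_pow (c : ℤ) (N k : ℕ) : e ((c:ℝ)/N) ^ k = e (((c*k : ℤ):ℝ)/N) := by
  induction k with
  | zero => simp [e]
  | succ n ih =>
    rw [pow_succ, ih, ← e_add]
    congr 1
    push_cast
    ring

lemma e_eq_one_iff (c : ℤ) (N : ℕ) (hN : 0 < N) : e ((c:ℝ)/N) = 1 ↔ (N:ℤ) ∣ c := by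
  have hNne : (N:ℂ) ≠ 0 := by exact_mod_cast hN.ne'
  have h2 : (2:ℂ) * Real.pi * Complex.I ≠ 0 := by
    simp [Real.pi_ne_zero, Complex.I_ne_zero, Complex.ofReal_ne_zero]
  unfold e
  rw [Complex.exp_eq_one_iff]
  constructor
  · rintro ⟨n, hn⟩
    have hz : ((c:ℝ)/N : ℝ) = ((c:ℂ)/N : ℂ) := by push_cast; rfl
    rw [show ((2:ℂ) * Real.pi * Complex.I * ((c:ℝ)/N : ℝ)) = ((c:ℂ)/N) * (2*Real.pi*Complex.I) by push_cast; ring] at hn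
    have : (c:ℂ)/N = n := mul_right_cancel₀ h2 hn
    have hc : (c:ℂ) = n * N := by
      field_simp at this
      linear_combination this
    have : c = n * N := by exact_mod_cast hc
    exact ⟨n, by linarith⟩
  · rintro ⟨t, ht⟩
    refine ⟨t, ?_⟩
    subst ht
    push_cast
    field_simp

lemma sum_e_zero (p : ℕ) [NeZero p] (hp : p.Prime) (c : ℤ) (hc : ¬ (p:ℤ) ∣ c) :
    ∑ k : ZMod p, e (((c * k.val : ℤ):ℝ)/p) = 0 := by
  have hζ1 : e ((c:ℝ)/p) ≠ 1 := fun h => hc ((e_eq_one_iff c p hp.pos).1 h)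
  have hζp : e ((c:ℝ)/p) ^ p = 1 := by
    rw [e_pow]
    have hpne : (p:ℝ) ≠ 0 := by exact_mod_cast (Nat.pos_of_ne_zero (NeZero.ne p)).ne'
    rw [show (((c * p : ℤ)):ℝ)/p = ((c:ℤ):ℝ) by push_cast; field_simp]
    exact e_int c
  have hsum : ∑ k : ZMod p, e ((c:ℝ)/p) ^ k.val = 0 := by
    rw [show (∑ k : ZMod p, e ((c:ℝ)/p) ^ k.val) = ∑ i ∈ Finset.range p, e ((c:ℝ)/p) ^ i from
      Finset.sum_nbij' (fun k => k.val) (fun i => (i : ZMod p))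
        (fun k _ => Finset.mem_range.2 (ZMod.val_lt k))
        (fun i _ => Finset.mem_univ _)
        (fun k _ => by simp [ZMod.natCast_val, ZMod.cast_id])
        (fun i hi => ZMod.val_natCast_of_lt (Finset.mem_range.1 hi))
        (fun k _ => rfl)]
    rw [geom_sum_eq hζ1, hζp, sub_self, zero_div]
  calc ∑ k : ZMod p, e (((c * k.val : ℤ):ℝ)/p) = ∑ k : ZMod p, e ((c:ℝ)/p) ^ k.val := by
        refine Finset.sum_congr rfl fun k _ => ?_
        rw [e_pow]
      _ = 0 := hsum

lemma key (p : ℕ) [Fact p.Prime] (m2 n2 : ℤ)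
    (hm2 : (p : ℤ) ∣ m2) (hn2 : ¬ (p : ℤ) ∣ n2) (s : ℕ) (hs : 1 < s) (C : ℤ) :
    ∑ v4 : (ZMod (p ^ s))ˣ,
      e (((m2 * (((v4⁻¹ : (ZMod (p ^ s))ˣ) : ZMod (p ^ s)).val : ℤ) * C
          + n2 * ((v4 : ZMod (p ^ s)).val : ℤ)) : ℝ) / (p : ℝ) ^ s) = 0 := by
  have hp : p.Prime := Fact.out
  haveI : NeZero p := ⟨hp.ne_zero⟩
  have hcast : ((p : ℝ)) ^ s = ((p ^ s : ℕ) : ℝ) := by push_cast; ring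
  simp only [hcast]
  set F : (ZMod (p ^ s))ˣ → ℂ := fun v4 =>
    e (((m2 * (((v4⁻¹ : (ZMod (p ^ s))ˣ) : ZMod (p ^ s)).val : ℤ) * C
        + n2 * ((v4 : ZMod (p ^ s)).val : ℤ)) : ℝ) / ((p ^ s : ℕ) : ℝ)) with hF
  have hdvd : p ^ (s - 1) ∣ p ^ s := pow_dvd_pow p (by omega)
  rw [← Finset.sum_fiberwise Finset.univ (fun v4 => ZMod.unitsMap hdvd v4) F]
  refine Finset.sum_eq_zero fun u _ => ?_
  obtain ⟨v0, hv0⟩ := ZMod.unitsMap_surjective hdvd u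
  -- the element q = p^(s-1) in ZMod (p^s), with q * q = 0
  set q : ZMod (p ^ s) := ((p ^ (s - 1) : ℕ) : ZMod (p ^ s)) with hq
  have hq2 : q * q = 0 := by
    rw [hq, ← Nat.cast_mul, ZMod.natCast_eq_zero_iff, ← pow_add]
    exact pow_dvd_pow p (by omega)
  -- the units 1 + k * q
  have hukinv : ∀ k : ZMod p, ((1 : ZMod (p ^ s)) + (k.val : ZMod (p ^ s)) * q)
      * ((1 : ZMod (p ^ s)) - (k.val : ZMod (p ^ s)) * q) = 1 := by
    intro k
    have : (k.val : ZMod (p ^ s)) * q * ((k.val : ZMod (p ^ s)) * q) = 0 := by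
      rw [show (k.val : ZMod (p ^ s)) * q * ((k.val : ZMod (p ^ s)) * q)
          = (k.val : ZMod (p ^ s)) * (k.val : ZMod (p ^ s)) * (q * q) by ring, hq2, mul_zero]
    linear_combination -this
  set uk : ZMod p → (ZMod (p ^ s))ˣ := fun k =>
    ⟨1 + (k.val : ZMod (p ^ s)) * q, 1 - (k.val : ZMod (p ^ s)) * q, hukinv k,
      by rw [mul_comm]; exact hukinv k⟩ with huk
  have hcastq : (ZMod.castHom hdvd (ZMod (p ^ (s - 1)))) q = 0 := by
    rw [hq, map_natCast, ZMod.natCast_self]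
  have hπuk : ∀ k : ZMod p, ZMod.unitsMap hdvd (uk k) = 1 := by
    intro k
    ext
    rw [ZMod.unitsMap_def]
    show (ZMod.castHom hdvd (ZMod (p ^ (s - 1)))) (1 + (k.val : ZMod (p ^ s)) * q) = 1
    rw [map_add, map_one, map_mul, hcastq, mul_zero, add_zero]
  set a : ℤ := (((v0⁻¹ : (ZMod (p ^ s))ˣ) : ZMod (p ^ s)).val : ℤ) with ha
  set b : ℤ := (((v0 : (ZMod (p ^ s))ˣ) : ZMod (p ^ s)).val : ℤ) with hb
  have hps : (p : ℤ) ^ s = (p : ℤ) ^ (s - 1) * p := by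
    rw [← pow_succ]; congr 1; omega
  have hpne : ((p : ℤ)) ^ (s - 1) ≠ 0 := by
    exact pow_ne_zero _ (by exact_mod_cast hp.pos.ne')
  have hbij : ∑ v4 ∈ Finset.univ.filter (fun v4 => ZMod.unitsMap hdvd v4 = u), F v4
      = ∑ k : ZMod p, F (v0 * uk k) := by
    refine (Finset.sum_bij (fun k _ => v0 * uk k) ?_ ?_ ?_ ?_).symm
    · intro k _
      simp only [Finset.mem_filter, Finset.mem_univ, true_and, map_mul, hπuk, hv0, mul_one]
    · intro k1 _ k2 _ hEq
      have h1 : uk k1 = uk k2 := mul_left_cancel hEq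
      have h2 : (k1.val : ZMod (p ^ s)) * q = (k2.val : ZMod (p ^ s)) * q := by
        have h := congrArg (fun x : (ZMod (p ^ s))ˣ => (x : ZMod (p ^ s))) h1
        simp only [huk] at h
        exact add_left_cancel h
      have h3 : ((p : ℤ)) ^ s ∣ ((k1.val : ℤ) - (k2.val : ℤ)) * (p : ℤ) ^ (s - 1) := by
        have h3' : (((p ^ s : ℕ)) : ℤ) ∣ ((k1.val : ℤ) - (k2.val : ℤ)) * (p : ℤ) ^ (s - 1) := by
          rw [← ZMod.intCast_zmod_eq_zero_iff_dvd]
          rw [hq] at h2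
          push_cast
          push_cast at h2
          linear_combination h2
        push_cast at h3'
        exact h3'
      obtain ⟨t, ht⟩ := h3
      rw [hps] at ht
      have h4 : ((k1.val : ℤ) - (k2.val : ℤ)) = p * t :=
        mul_right_cancel₀ hpne (by linear_combination ht)
      have h5 : (p : ℤ) ∣ ((k1.val : ℤ) - (k2.val : ℤ)) := ⟨t, h4⟩
      have h6 : ((k1.val : ℤ) - (k2.val : ℤ)) = 0 := by
        refine Int.eq_zero_of_abs_lt_dvd h5 ?_
        have l1 := ZMod.val_lt k1
        have l2 := ZMod.val_lt k2
        rw [abs_lt]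
        omega
      have : k1.val = k2.val := by omega
      exact ZMod.val_injective p this
    · intro b4 hb4
      rw [Finset.mem_filter] at hb4
      set d : (ZMod (p ^ s))ˣ := b4 * v0⁻¹ with hd
      have hπd : ZMod.unitsMap hdvd d = 1 := by
        rw [hd, map_mul, hb4.2, map_inv, hv0, mul_inv_cancel]
      have hφ : (ZMod.castHom hdvd (ZMod (p ^ (s - 1)))) ((d : (ZMod (p ^ s))ˣ) : ZMod (p ^ s)) = 1 := by
        have h := congrArg (Units.val) hπd
        simpa [ZMod.unitsMap_def] using h
      have hx0 : (ZMod.castHom hdvd (ZMod (p ^ (s - 1)))) (((d : (ZMod (p ^ s))ˣ) : ZMod (p ^ s)) - 1) = 0 := by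
        rw [map_sub, hφ, map_one, sub_self]
      have hx1 : (((((d : (ZMod (p ^ s))ˣ) : ZMod (p ^ s)) - 1).val : ℕ) : ZMod (p ^ (s - 1))) = 0 := by
        rw [ZMod.natCast_val]
        rw [ZMod.castHom_apply] at hx0
        exact hx0
      rw [ZMod.natCast_eq_zero_iff] at hx1
      obtain ⟨t, ht⟩ := hx1
      refine ⟨(t : ZMod p), Finset.mem_univ _, ?_⟩
      have hukd : uk ((t : ZMod p)) = d := by
        ext
        show 1 + (((t : ZMod p)).val : ZMod (p ^ s)) * q = (d : ZMod (p ^ s))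
        have hdval : (d : ZMod (p ^ s)) = 1 + ((p ^ (s - 1) * t : ℕ) : ZMod (p ^ s)) := by
          rw [← ht, ZMod.natCast_val, ZMod.cast_id]
          ring
        rw [hdval, ZMod.val_natCast, hq]
        have hz : (((t % p : ℕ) : ZMod (p ^ s))) * ((p ^ (s - 1) : ℕ) : ZMod (p ^ s))
            = ((p ^ (s - 1) * t : ℕ) : ZMod (p ^ s)) := by
          have hdvd0 : (((p ^ s : ℕ)) : ℤ) ∣ ((t % p : ℕ) : ℤ) * ((p ^ (s - 1) : ℕ) : ℤ)
              - ((p ^ (s - 1) * t : ℕ) : ℤ) := by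
            refine ⟨-((t / p : ℕ) : ℤ), ?_⟩
            have hmd : ((t % p : ℕ) : ℤ) + (p : ℤ) * ((t / p : ℕ) : ℤ) = (t : ℤ) := by
              exact_mod_cast congrArg (Nat.cast : ℕ → ℤ) (Nat.mod_add_div t p)
            push_cast [hps] at hmd ⊢
            linear_combination ((p : ℤ) ^ (s - 1)) * hmd
          have h00 := (ZMod.intCast_zmod_eq_zero_iff_dvd _ (p ^ s)).mpr hdvd0
          have h01 : (((t % p : ℕ) : ZMod (p ^ s))) * ((p ^ (s - 1) : ℕ) : ZMod (p ^ s))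
              - ((p ^ (s - 1) * t : ℕ) : ZMod (p ^ s)) = 0 := by
            simpa only [Int.cast_sub, Int.cast_mul, Int.cast_natCast] using h00
          linear_combination h01
        rw [hz]
      show v0 * uk ((t : ZMod p)) = b4
      rw [hukd, hd]
      rw [mul_comm b4 v0⁻¹, mul_inv_cancel_left]
    · intro k _
      rfl
  rw [hbij]
  -- per-term identity
  have hterm : ∀ k : ZMod p, F (v0 * uk k)
      = F v0 * e ((((n2 * b * (k.val : ℤ)) : ℤ) : ℝ) / ((p : ℕ) : ℝ)) := by
    intro k
    set ak : ℤ := ((((v0 * uk k)⁻¹ : (ZMod (p ^ s))ˣ) : ZMod (p ^ s)).val : ℤ) with hak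
    set bk : ℤ := (((v0 * uk k : (ZMod (p ^ s))ˣ) : ZMod (p ^ s)).val : ℤ) with hbk
    have hzA : ((v0 * uk k : (ZMod (p ^ s))ˣ) : ZMod (p ^ s))
        = ((v0 : (ZMod (p ^ s))ˣ) : ZMod (p ^ s))
          * (1 + (ZMod.cast k : ZMod (p ^ s)) * ((p : ZMod (p ^ s))) ^ (s - 1)) := by
      rw [Units.val_mul]
      show _ * ((1 : ZMod (p ^ s)) + (k.val : ZMod (p ^ s)) * q) = _
      rw [hq, ← ZMod.natCast_val k]
      push_cast
      ring
    have hA : ((p ^ s : ℕ) : ℤ) ∣ bk - b * (1 + (k.val : ℤ) * (p : ℤ) ^ (s - 1)) := by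
      rw [hbk, hb, ← ZMod.intCast_zmod_eq_zero_iff_dvd]
      push_cast
      simp only [ZMod.natCast_val, ZMod.cast_id, ZMod.intCast_cast]
      rw [← Units.val_mul, hzA, sub_self]
    have hzB : (((v0 * uk k)⁻¹ : (ZMod (p ^ s))ˣ) : ZMod (p ^ s))
        = ((v0⁻¹ : (ZMod (p ^ s))ˣ) : ZMod (p ^ s))
          * (1 - (ZMod.cast k : ZMod (p ^ s)) * ((p : ZMod (p ^ s))) ^ (s - 1)) := by
      rw [mul_inv, Units.val_mul]
      show _ * ((1 : ZMod (p ^ s)) - (k.val : ZMod (p ^ s)) * q) = _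
      rw [hq, ← ZMod.natCast_val k]
      push_cast
      ring
    have hB : ((p ^ s : ℕ) : ℤ) ∣ ak - a * (1 - (k.val : ℤ) * (p : ℤ) ^ (s - 1)) := by
      rw [hak, ha, ← ZMod.intCast_zmod_eq_zero_iff_dvd]
      push_cast
      simp only [ZMod.natCast_val, ZMod.cast_id, ZMod.intCast_cast]
      rw [hzB]
      ring
    have hC : ((p ^ s : ℕ) : ℤ) ∣ (m2 * ak * C + n2 * bk)
        - ((m2 * a * C + n2 * b) + n2 * b * (k.val : ℤ) * (p : ℤ) ^ (s - 1)) := by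
      obtain ⟨m2', hm2'⟩ := hm2
      have h3 : ((p ^ s : ℕ) : ℤ) ∣ m2 * a * C * ((k.val : ℤ) * (p : ℤ) ^ (s - 1)) := by
        refine ⟨m2' * a * C * (k.val : ℤ), ?_⟩
        push_cast
        rw [hps, hm2']
        ring
      have hr : (m2 * ak * C + n2 * bk)
          - ((m2 * a * C + n2 * b) + n2 * b * (k.val : ℤ) * (p : ℤ) ^ (s - 1))
          = m2 * C * (ak - a * (1 - (k.val : ℤ) * (p : ℤ) ^ (s - 1)))
            + n2 * (bk - b * (1 + (k.val : ℤ) * (p : ℤ) ^ (s - 1)))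
            - m2 * a * C * ((k.val : ℤ) * (p : ℤ) ^ (s - 1)) := by ring
      rw [hr]
      exact dvd_sub (dvd_add (Dvd.dvd.mul_left hB (m2 * C)) (Dvd.dvd.mul_left hA n2)) h3
    have hsplit : ((((m2 * a * C + n2 * b) + n2 * b * (k.val : ℤ) * (p : ℤ) ^ (s - 1)) : ℤ) : ℝ) / ((p ^ s : ℕ) : ℝ)
        = (((m2 * a * C + n2 * b) : ℤ) : ℝ) / ((p ^ s : ℕ) : ℝ)
          + (((n2 * b * (k.val : ℤ)) : ℤ) : ℝ) / ((p : ℕ) : ℝ) := by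
      have hpR : ((p : ℕ) : ℝ) ≠ 0 := by
        exact_mod_cast hp.pos.ne'
      have hpsR : ((p ^ s : ℕ) : ℝ) ≠ 0 := by
        exact_mod_cast (pow_pos hp.pos s).ne'
      have hpsR' : ((p : ℝ)) ^ (s - 1) ≠ 0 := pow_ne_zero _ (by exact_mod_cast hp.pos.ne')
      have hpsRe : ((p ^ s : ℕ) : ℝ) = (p : ℝ) ^ (s - 1) * (p : ℝ) := by
        push_cast
        rw [← pow_succ]
        congr 1
        omega
      rw [hpsRe]
      push_cast
      field_simp
    have hL : F (v0 * uk k) = e ((((m2 * ak * C + n2 * bk) : ℤ) : ℝ) / ((p ^ s : ℕ) : ℝ)) := by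
      simp only [hF]
      congr 1
      rw [hak, hbk]
      push_cast
      ring
    have hR : F v0 = e ((((m2 * a * C + n2 * b) : ℤ) : ℝ) / ((p ^ s : ℕ) : ℝ)) := by
      simp only [hF]
      congr 1
      rw [ha, hb]
      push_cast
      ring
    rw [hL, hR, e_congr hC, hsplit, e_add]
  simp only [hterm]
  rw [← Finset.mul_sum]
  have hpb : ¬ (p : ℤ) ∣ n2 * b := by
    have hpZ : Prime (p : ℤ) := Nat.prime_iff_prime_int.mp hp
    rw [hpZ.dvd_mul]
    rintro (h | h)
    · exact hn2 h
    · have hcop := ZMod.val_coe_unit_coprime v0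
      have hdb : (p : ℕ) ∣ ((v0 : (ZMod (p ^ s))ˣ) : ZMod (p ^ s)).val := by
        rw [hb] at h
        exact_mod_cast h
      have hdp : (p : ℕ) ∣ p ^ s := dvd_pow_self p (by omega)
      have := Nat.dvd_gcd hdb hdp
      rw [Nat.Coprime] at hcop
      rw [hcop] at this
      exact hp.one_lt.ne' (Nat.dvd_one.mp this)
  rw [sum_e_zero p hp (n2 * b) hpb, mul_zero]

/-- For a prime `p`, `s > 1`, `r ≥ s`, and integers with `p ∣ m2` and `p ∤ n2`, the
Kloosterman-type sum attached to `w = s_α s_β` vanishes. -/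
theorem stmt_3 (p : ℕ) [Fact p.Prime] (m1 m2 n2 : ℤ)
    (hm2 : (p : ℤ) ∣ m2) (hn2 : ¬ (p : ℤ) ∣ n2)
    (r s : ℕ) (hs : 1 < s) (hsr : s ≤ r) :
    (∑ v4 : (ZMod (p ^ s))ˣ,
      ∑ v3 ∈ Finset.univ.filter (fun v3 : ZMod (p ^ r) => Nat.gcd v3.val (p ^ (r - s)) = 1),
        e ((m1 * ((((v3.val : ZMod (p ^ (r - s)))⁻¹ : ZMod (p ^ (r - s))).val : ℤ)) : ℝ)
            / (p : ℝ) ^ (r - s)) *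
        e (((m2 * (((v4⁻¹ : (ZMod (p ^ s))ˣ) : ZMod (p ^ s)).val : ℤ) * (v3.val : ℤ) ^ 2
            + n2 * ((v4 : ZMod (p ^ s)).val : ℤ)) : ℝ) / (p : ℝ) ^ s)) = 0 := by
  rw [Finset.sum_comm]
  refine Finset.sum_eq_zero fun v3 hv3 => ?_
  rw [← Finset.mul_sum]
  simp only [← Int.cast_pow]
  rw [key p m2 n2 hm2 hn2 s hs ((v3.val : ℤ) ^ 2), mul_zero]
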